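/- (Group-affinity of the contact-aided inertial process model on SE₃(3).) Fix ω̃, ã, g ∈ ℝ³. Define f : Matrix 6 6 ℝ → Matrix 6 6 ℝ as follows: for a 6×6 matrix X, writing R for its top-left 3×3 block, v ∈ ℝ³ for the top three entries of its 4th column, p ∈ ℝ³ for the top three entries of its 5th column, and d ∈ ℝ³ for the top three entries of its 6th column, let f(X) be the 6×6 matrix whose top-left 3×3 block is R(ω̃)ₓ, whose 4th column has top three entries R ã + g, whose 5th column has top three entries v, whose 6th column has top three entries 0 (the contact position is constant), and whose remaining entries (in particular the bottom three rows) are zero. Then for all 6×6 matrices X₁, X₂ whose bottom three rows equal [0_{3×3} I₃], one has f(X₁ X₂) = f(X₁) X₂ + X₁ f(X₂) − X₁ f(I₆) X₂, where I₆ is the 6×6 identity matrix; i.e., the contact-aided inertial process model is group affine. -/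
import Mathlib


open Matrix

/-- The skew-symmetric matrix `(ω)ₓ` associated with `ω ∈ ℝ³`. -/
def skew3 (ω : Fin 3 → ℝ) : Matrix (Fin 3) (Fin 3) ℝ :=
  !![0, -ω 2, ω 1; ω 2, 0, -ω 0; -ω 1, ω 0, 0]

/-- The top-left `3 × 3` block `R` of a `6 × 6` matrix. -/
def blockR6 (X : Matrix (Fin 6) (Fin 6) ℝ) : Matrix (Fin 3) (Fin 3) ℝ :=
  X.submatrix (Fin.castLE (by norm_num)) (Fin.castLE (by norm_num))

/-- The top three entries `v` of the 4th column of a `6 × 6` matrix. -/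
def colv6 (X : Matrix (Fin 6) (Fin 6) ℝ) : Fin 3 → ℝ :=
  fun i => X (Fin.castLE (by norm_num) i) 3

/-- The contact-aided inertial process model `f` on `6 × 6` matrices: for `X`
with blocks `R, v, p, d`, `f X` has top-left block `R (ω̃)ₓ`, 4th-column top
entries `R ã + g`, 5th-column top entries `v`, 6th-column top entries `0`
(the contact position is constant), and zeros elsewhere. -/
def fContact (ω a g : Fin 3 → ℝ) (X : Matrix (Fin 6) (Fin 6) ℝ) :
    Matrix (Fin 6) (Fin 6) ℝ :=
  Matrix.of fun i j =>
    if hi : (i : ℕ) < 3 then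
      if hj : (j : ℕ) < 3 then (blockR6 X * skew3 ω) ⟨i, hi⟩ ⟨j, hj⟩
      else if (j : ℕ) = 3 then (blockR6 X *ᵥ a + g) ⟨i, hi⟩
      else if (j : ℕ) = 4 then colv6 X ⟨i, hi⟩
      else 0
    else 0


lemma fin6_val_0 : ((0:Fin 6):ℕ) = 0 := rfl
lemma fin6_val_1 : ((1:Fin 6):ℕ) = 1 := rfl
lemma fin6_val_2 : ((2:Fin 6):ℕ) = 2 := rfl
lemma fin6_val_3 : ((3:Fin 6):ℕ) = 3 := rfl
lemma fin6_val_4 : ((4:Fin 6):ℕ) = 4 := rfl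
lemma fin6_val_5 : ((5:Fin 6):ℕ) = 5 := rfl
lemma fin3_mk_0 (h) : (⟨0, h⟩ : Fin 3) = 0 := rfl
lemma fin3_mk_1 (h) : (⟨1, h⟩ : Fin 3) = 1 := rfl
lemma fin3_mk_2 (h) : (⟨2, h⟩ : Fin 3) = 2 := rfl
lemma fin3_val_0 : ((0:Fin 3):ℕ) = 0 := rfl
lemma fin3_val_1 : ((1:Fin 3):ℕ) = 1 := rfl
lemma fin3_val_2 : ((2:Fin 3):ℕ) = 2 := rfl
lemma fin6_mk_0 (h) : (⟨0, h⟩ : Fin 6) = 0 := rfl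
lemma fin6_mk_1 (h) : (⟨1, h⟩ : Fin 6) = 1 := rfl
lemma fin6_mk_2 (h) : (⟨2, h⟩ : Fin 6) = 2 := rfl
lemma fin6_mk_3 (h) : (⟨3, h⟩ : Fin 6) = 3 := rfl
lemma fin6_mk_4 (h) : (⟨4, h⟩ : Fin 6) = 4 := rfl
lemma fin6_mk_5 (h) : (⟨5, h⟩ : Fin 6) = 5 := rfl

set_option maxHeartbeats 4000000 in
/-- **Group-affinity of the contact-aided inertial process model on SE₃(3).**
For all `6 × 6` matrices `X₁, X₂` whose bottom three rows equal `[0 I₃]`,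
`f (X₁ X₂) = f X₁ · X₂ + X₁ · f X₂ − X₁ · f I₆ · X₂`. -/
theorem fContact_group_affine (ω a g : Fin 3 → ℝ)
    (X₁ X₂ : Matrix (Fin 6) (Fin 6) ℝ)
    (hX₁ : ∀ i : Fin 6, 3 ≤ (i : ℕ) → ∀ j : Fin 6,
      X₁ i j = if (i : ℕ) = (j : ℕ) then 1 else 0)
    (hX₂ : ∀ i : Fin 6, 3 ≤ (i : ℕ) → ∀ j : Fin 6,
      X₂ i j = if (i : ℕ) = (j : ℕ) then 1 else 0) :
    fContact ω a g (X₁ * X₂) =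
      fContact ω a g X₁ * X₂ + X₁ * fContact ω a g X₂ -
        X₁ * fContact ω a g 1 * X₂ := by
  have h13 := hX₁ 3 (by decide); have h14 := hX₁ 4 (by decide); have h15 := hX₁ 5 (by decide)
  have h23 := hX₂ 3 (by decide); have h24 := hX₂ 4 (by decide); have h25 := hX₂ 5 (by decide)
  ext i j
  fin_cases i <;> fin_cases j <;>
  · simp only [fContact, blockR6, colv6, skew3, Matrix.sub_apply, Matrix.add_apply,
      Matrix.mul_apply, Fin.sum_univ_six, Fin.sum_univ_three, Matrix.of_apply,
      Matrix.submatrix_apply, Matrix.one_apply, Matrix.mulVec, dotProduct,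
      Pi.add_apply, Fin.castLE_mk, Fin.castLE,
      fin6_val_0, fin6_val_1, fin6_val_2, fin6_val_3, fin6_val_4, fin6_val_5,
      fin3_mk_0, fin3_mk_1, fin3_mk_2, fin3_val_0, fin3_val_1, fin3_val_2,
      fin6_mk_0, fin6_mk_1, fin6_mk_2, fin6_mk_3, fin6_mk_4, fin6_mk_5,
      h13, h14, h15, h23, h24, h25]
    norm_num [Matrix.cons_val', Matrix.cons_val_zero,
      Matrix.cons_val_one, Matrix.head_cons, Matrix.empty_val', Matrix.cons_val_fin_one,
      Matrix.head_fin_const, Fin.ext_iff, fin3_mk_0, fin3_mk_1, fin3_mk_2,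
      fin3_val_0, fin3_val_1, fin3_val_2, fin6_mk_0, fin6_mk_1, fin6_mk_2,
      fin6_mk_3, fin6_mk_4, fin6_mk_5,
      fin6_val_0, fin6_val_1, fin6_val_2, fin6_val_3, fin6_val_4, fin6_val_5,
      h13, h14, h15, h23, h24, h25]
    try ring
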